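/- Let A, Â ∈ ℝ^{N×N}, Ā, Ā̂ ∈ ℝ^{F×F}, and X, X̂ ∈ ℝ^{N×F}. Then in the L_{2,1} norm, ‖A X Ā − Â X̂ Ā̂‖ ≤ (‖A‖₂·‖Ā − Ā̂‖_∞ + ‖A − Â‖₂·‖Ā̂‖_∞)·‖X‖ + ‖Â‖₂·‖Ā̂‖_∞·‖X − X̂‖. -/

import Mathlib

/-- The `L_{2,1}` graph-signal norm: sum of Euclidean norms of the columns. -/
noncomputable def l21 {N F : ℕ} (X : Matrix (Fin N) (Fin F) ℝ) : ℝ :=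
  ∑ f : Fin F, Real.sqrt (∑ i : Fin N, (X i f) ^ 2)

/-- The spectral norm (operator norm induced by the Euclidean norm). -/
noncomputable def specNorm {N M : ℕ} (A : Matrix (Fin N) (Fin M) ℝ) : ℝ :=
  ‖LinearMap.toContinuousLinearMap (Matrix.toEuclideanLin A)‖

/-- The max-absolute-row-sum operator norm. -/
noncomputable def rowSumNorm {F G : ℕ} (A : Matrix (Fin F) (Fin G) ℝ) : ℝ :=
  ⨆ f : Fin F, ∑ g : Fin G, |A f g|

noncomputable def col {N F : ℕ} (X : Matrix (Fin N) (Fin F) ℝ) (f : Fin F) :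
    EuclideanSpace ℝ (Fin N) := (WithLp.equiv 2 _).symm (fun i => X i f)

lemma norm_col {N F : ℕ} (X : Matrix (Fin N) (Fin F) ℝ) (f : Fin F) :
    ‖col X f‖ = Real.sqrt (∑ i : Fin N, (X i f) ^ 2) := by
  rw [EuclideanSpace.norm_eq]
  congr 1; apply Finset.sum_congr rfl; intro i _
  simp [col, sq_abs]

lemma l21_eq {N F : ℕ} (X : Matrix (Fin N) (Fin F) ℝ) :
    l21 X = ∑ f : Fin F, ‖col X f‖ := by
  simp [l21, norm_col]

lemma col_mul_left {N M F : ℕ} (A : Matrix (Fin N) (Fin M) ℝ)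
    (X : Matrix (Fin M) (Fin F) ℝ) (f : Fin F) :
    col (A * X) f = Matrix.toEuclideanLin A (col X f) := by
  ext i
  simp [col, Matrix.toEuclideanLin_apply, Matrix.mul_apply, Matrix.mulVec, dotProduct]

lemma specNorm_nonneg {N M : ℕ} (A : Matrix (Fin N) (Fin M) ℝ) : 0 ≤ specNorm A :=
  norm_nonneg _

lemma rowSumNorm_nonneg {F G : ℕ} (A : Matrix (Fin F) (Fin G) ℝ) : 0 ≤ rowSumNorm A :=
  Real.iSup_nonneg fun f => Finset.sum_nonneg fun g _ => abs_nonneg _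

lemma l21_nonneg {N F : ℕ} (X : Matrix (Fin N) (Fin F) ℝ) : 0 ≤ l21 X := by
  rw [l21_eq]; exact Finset.sum_nonneg fun f _ => norm_nonneg _

lemma l21_mul_left {N F : ℕ} (A : Matrix (Fin N) (Fin N) ℝ)
    (X : Matrix (Fin N) (Fin F) ℝ) :
    l21 (A * X) ≤ specNorm A * l21 X := by
  rw [l21_eq, l21_eq, Finset.mul_sum]
  apply Finset.sum_le_sum
  intro f _
  rw [col_mul_left]
  exact (LinearMap.toContinuousLinearMap (Matrix.toEuclideanLin A)).le_opNorm (col X f)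

lemma col_mul_right {N F G : ℕ} (X : Matrix (Fin N) (Fin F) ℝ)
    (B : Matrix (Fin F) (Fin G) ℝ) (g : Fin G) :
    col (X * B) g = ∑ f : Fin F, B f g • col X f := by
  ext i
  have : (∑ f : Fin F, B f g • col X f) i = ∑ f : Fin F, B f g * X i f := by
    rw [show ((∑ f : Fin F, B f g • col X f) i) = ∑ f : Fin F, (B f g • col X f) i from
      by rw [WithLp.ofLp_sum]; exact Finset.sum_apply i Finset.univ _]
    simp [col]
  rw [this]
  simp [col, Matrix.mul_apply, mul_comm]

lemma l21_mul_right {N F G : ℕ} (X : Matrix (Fin N) (Fin F) ℝ)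
    (B : Matrix (Fin F) (Fin G) ℝ) :
    l21 (X * B) ≤ rowSumNorm B * l21 X := by
  rw [l21_eq, l21_eq]
  calc ∑ g : Fin G, ‖col (X * B) g‖
      ≤ ∑ g : Fin G, ∑ f : Fin F, |B f g| * ‖col X f‖ := by
        apply Finset.sum_le_sum; intro g _
        rw [col_mul_right]
        refine (norm_sum_le _ _).trans ?_
        apply Finset.sum_le_sum; intro f _
        rw [norm_smul, Real.norm_eq_abs]
    _ = ∑ f : Fin F, (∑ g : Fin G, |B f g|) * ‖col X f‖ := by
        rw [Finset.sum_comm]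
        simp [Finset.sum_mul]
    _ ≤ ∑ f : Fin F, rowSumNorm B * ‖col X f‖ := by
        apply Finset.sum_le_sum; intro f _
        have hle : ∑ g : Fin G, |B f g| ≤ rowSumNorm B :=
          le_ciSup (f := fun f => ∑ g : Fin G, |B f g|)
            (Set.Finite.bddAbove (Set.finite_range _)) f
        exact mul_le_mul_of_nonneg_right hle (norm_nonneg _)
    _ = rowSumNorm B * ∑ f : Fin F, ‖col X f‖ := by rw [Finset.mul_sum]

lemma l21_add_le {N F : ℕ} (X Y : Matrix (Fin N) (Fin F) ℝ) :
    l21 (X + Y) ≤ l21 X + l21 Y := by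
  rw [l21_eq, l21_eq, l21_eq, ← Finset.sum_add_distrib]
  apply Finset.sum_le_sum; intro f _
  have : col (X + Y) f = col X f + col Y f := by ext i; simp [col]
  rw [this]; exact norm_add_le _ _

/-- Three-term splitting of the trajectory-deviation error:
`‖A X Ā − Â X̂ Ā̂‖ ≤ (‖A‖₂‖Ā−Ā̂‖_∞ + ‖A−Â‖₂‖Ā̂‖_∞)‖X‖ + ‖Â‖₂‖Ā̂‖_∞‖X−X̂‖`. -/
theorem stmt15 {N F : ℕ} (A Ah : Matrix (Fin N) (Fin N) ℝ)
    (Ab Abh : Matrix (Fin F) (Fin F) ℝ) (X Xh : Matrix (Fin N) (Fin F) ℝ) :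
    l21 (A * X * Ab - Ah * Xh * Abh)
      ≤ (specNorm A * rowSumNorm (Ab - Abh) + specNorm (A - Ah) * rowSumNorm Abh) * l21 X
        + specNorm Ah * rowSumNorm Abh * l21 (X - Xh) := by
  have hsplit : A * X * Ab - Ah * Xh * Abh
      = A * X * (Ab - Abh) + ((A - Ah) * X * Abh + Ah * (X - Xh) * Abh) := by
    simp only [Matrix.mul_sub, Matrix.sub_mul]
    abel
  have h1 : l21 (A * X * (Ab - Abh)) ≤ specNorm A * rowSumNorm (Ab - Abh) * l21 X := by
    calc l21 (A * X * (Ab - Abh)) ≤ rowSumNorm (Ab - Abh) * l21 (A * X) :=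
          l21_mul_right _ _
      _ ≤ rowSumNorm (Ab - Abh) * (specNorm A * l21 X) :=
          mul_le_mul_of_nonneg_left (l21_mul_left _ _) (rowSumNorm_nonneg _)
      _ = specNorm A * rowSumNorm (Ab - Abh) * l21 X := by ring
  have h2 : l21 ((A - Ah) * X * Abh) ≤ specNorm (A - Ah) * rowSumNorm Abh * l21 X := by
    calc l21 ((A - Ah) * X * Abh) ≤ rowSumNorm Abh * l21 ((A - Ah) * X) :=
          l21_mul_right _ _
      _ ≤ rowSumNorm Abh * (specNorm (A - Ah) * l21 X) :=
          mul_le_mul_of_nonneg_left (l21_mul_left _ _) (rowSumNorm_nonneg _)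
      _ = specNorm (A - Ah) * rowSumNorm Abh * l21 X := by ring
  have h3 : l21 (Ah * (X - Xh) * Abh) ≤ specNorm Ah * rowSumNorm Abh * l21 (X - Xh) := by
    calc l21 (Ah * (X - Xh) * Abh) ≤ rowSumNorm Abh * l21 (Ah * (X - Xh)) :=
          l21_mul_right _ _
      _ ≤ rowSumNorm Abh * (specNorm Ah * l21 (X - Xh)) :=
          mul_le_mul_of_nonneg_left (l21_mul_left _ _) (rowSumNorm_nonneg _)
      _ = specNorm Ah * rowSumNorm Abh * l21 (X - Xh) := by ring
  calc l21 (A * X * Ab - Ah * Xh * Abh)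
      ≤ l21 (A * X * (Ab - Abh)) + (l21 ((A - Ah) * X * Abh) + l21 (Ah * (X - Xh) * Abh)) := by
        rw [hsplit]
        exact (l21_add_le _ _).trans (by gcongr; exact l21_add_le _ _)
    _ ≤ specNorm A * rowSumNorm (Ab - Abh) * l21 X
        + (specNorm (A - Ah) * rowSumNorm Abh * l21 X
          + specNorm Ah * rowSumNorm Abh * l21 (X - Xh)) := by gcongr
    _ = (specNorm A * rowSumNorm (Ab - Abh) + specNorm (A - Ah) * rowSumNorm Abh) * l21 X
        + specNorm Ah * rowSumNorm Abh * l21 (X - Xh) := by ring
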